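/- Let φ(x) = x² + x + μ with μ ∈ ℤ. Then φ is not post-critically finite, i.e., the forward orbit of its unique critical point −1/2 under iteration of φ is infinite. -/

import Mathlib

lemma step_val (μ : ℤ) (x : ℚ) (hv : padicValRat 2 x < 0) :
    padicValRat 2 (x ^ 2 + x + (μ : ℚ)) = 2 * padicValRat 2 x := by
  have hx : x ≠ 0 := by rintro rfl; simp at hv
  have hx2 : x ^ 2 ≠ 0 := pow_ne_zero _ hx
  have hvx2 : padicValRat 2 (x ^ 2) = 2 * padicValRat 2 x := by
    rw [padicValRat.pow (p := 2) x]; norm_num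
  have hμval : 0 ≤ padicValRat 2 (μ : ℚ) := by
    rw [padicValRat.of_int]
    exact_mod_cast Int.natCast_nonneg _
  -- valuation of x + μ equals valuation of x
  have hxμ : padicValRat 2 (x + (μ : ℚ)) = padicValRat 2 x := by
    by_cases hμ : (μ : ℚ) = 0
    · simp [hμ]
    · have hne : x + (μ : ℚ) ≠ 0 := by
        intro h
        have : x = -(μ : ℚ) := by linarith [h]
        rw [this, padicValRat.neg] at hv
        linarith
      rw [padicValRat.add_eq_of_lt (p := 2) hne hx hμ (lt_of_lt_of_le hv hμval)]
  have h2v : 2 * padicValRat 2 x < padicValRat 2 (x + (μ : ℚ)) := by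
    rw [hxμ]; linarith
  have hsum_ne : x ^ 2 + (x + (μ : ℚ)) ≠ 0 := by
    intro h
    have hxμne : x + (μ : ℚ) ≠ 0 := by
      intro h0; rw [h0, add_zero] at h; exact hx2 h
    have : x ^ 2 = -(x + (μ : ℚ)) := by linarith [h]
    have := congrArg (padicValRat 2) this
    rw [hvx2, padicValRat.neg, hxμ] at this
    linarith
  have : x ^ 2 + x + (μ : ℚ) = x ^ 2 + (x + (μ : ℚ)) := by ring
  rw [this, padicValRat.add_eq_of_lt (p := 2) hsum_ne hx2 (by
        intro h0; rw [h0] at hxμ; simp at hxμ; linarith) (by rw [hvx2]; exact h2v),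
    hvx2]

lemma iter_val (μ : ℤ) (n : ℕ) :
    padicValRat 2 ((fun x : ℚ => x ^ 2 + x + (μ : ℚ))^[n] (-(1/2))) = -(2 ^ n : ℤ) := by
  induction n with
  | zero =>
      simp only [Function.iterate_zero, id_eq, pow_zero]
      rw [padicValRat.neg]
      have : (1/2 : ℚ) = (1 : ℚ) / (2 : ℚ) := by norm_num
      rw [this, padicValRat.div (p := 2) one_ne_zero two_ne_zero]
      have h2 : padicValRat 2 (2 : ℚ) = 1 := by exact_mod_cast padicValRat.self (p := 2) one_lt_two
      simp [h2, padicValRat.one]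
  | succ n ih =>
      rw [Function.iterate_succ_apply']
      have hv : padicValRat 2 ((fun x : ℚ => x ^ 2 + x + (μ : ℚ))^[n] (-(1/2))) < 0 := by
        rw [ih]
        have : (0:ℤ) < 2 ^ n := by positivity
        linarith
      have := step_val μ _ hv
      rw [this, ih]; ring

/-- Let `φ(x) = x² + x + μ` with `μ ∈ ℤ`.  Then `φ` is not
post-critically finite: the forward orbit of its unique critical point `−1/2` under
iteration of `φ` is infinite. -/
theorem stmt_14 (μ : ℤ) :
    (Set.range fun n : ℕ =>
      (fun x : ℚ => x ^ 2 + x + (μ : ℚ))^[n] (-(1/2))).Infinite := by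
  apply Set.infinite_range_of_injective
  intro n m h
  have hn := iter_val μ n
  have hm := iter_val μ m
  simp only [] at h
  rw [h, hm] at hn
  have h2 : (2 : ℤ) ^ m = 2 ^ n := by linarith
  have h3 : (2 : ℕ) ^ m = 2 ^ n := by exact_mod_cast h2
  exact (Nat.pow_right_injective (le_refl 2) h3).symm
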